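/- Let f : ℝ^d → ℝ be ρ-weakly convex and continuous, with ρ, η, β > 0. Suppose that for each x ∈ ℝ^d there is a continuous η-weakly convex model f_x : ℝ^d → ℝ with |f(y) − f_x(y)| ≤ (β/2)‖y − x‖² for all y. Let τ > max{η, 2ρ, (4β + ρ + η)/2}, set ρ̂ = τ/2 + (ρ + η)/4, and fix α ∈ (0, 1]. For a point x ∈ ℝ^d, let y be the unique minimizer of z ↦ f_x(z) + (τ/2)‖z − x‖², set x⁺ = (1 − α)x + αy, and let x̂ be the unique minimizer of z ↦ f(z) + (ρ̂/2)‖z − x‖². Then, with F(u) := min_z { f(z) + (ρ̂/2)‖z − u‖² } denoting the Moreau envelope, the sufficient decrease inequality holds: F(x⁺) ≤ F(x) − (ρ̂(τ − ρ̂ − β)/(2α(ρ̂ + τ − ρ − η)))‖x⁺ − x‖² − (α(2ρ̂ − ρ − η − β)/(2ρ̂(ρ̂ + τ − ρ − η)))‖ρ̂(x − x̂)‖². -/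

import Mathlib

open Set Filter Topology


section aux

variable {E : Type*} [NormedAddCommGroup E] [InnerProductSpace ℝ E]

lemma combo_norm_sq (w z : E) (t : ℝ) :
    ‖(1 - t) • w + t • z‖ ^ 2
      = (1 - t) * ‖w‖ ^ 2 + t * ‖z‖ ^ 2 - t * (1 - t) * ‖z - w‖ ^ 2 := by
  have h1 : ‖(1 - t) • w + t • z‖ ^ 2
      = ‖(1 - t) • w‖ ^ 2 + 2 * inner ℝ ((1 - t) • w) (t • z) + ‖t • z‖ ^ 2 :=
    norm_add_sq_real _ _
  have h2 : ‖z - w‖ ^ 2 = ‖z‖ ^ 2 - 2 * inner ℝ z w + ‖w‖ ^ 2 := norm_sub_sq_real _ _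
  have h3 : (inner ℝ ((1 - t) • w) (t • z) : ℝ) = (1 - t) * t * inner ℝ w z := by
    rw [real_inner_smul_left, real_inner_smul_right]; ring
  have h4 : (inner ℝ z w : ℝ) = inner ℝ w z := real_inner_comm _ _
  have h5 : ‖(1 - t) • w‖ ^ 2 = (1 - t) ^ 2 * ‖w‖ ^ 2 := by
    rw [norm_smul, mul_pow, Real.norm_eq_abs, sq_abs]
  have h6 : ‖t • z‖ ^ 2 = t ^ 2 * ‖z‖ ^ 2 := by
    rw [norm_smul, mul_pow, Real.norm_eq_abs, sq_abs]
  rw [h1, h2, h3, h4, h5, h6]; ring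

lemma strong_min (g : E → ℝ) (m c : ℝ)
    (hg : ConvexOn ℝ Set.univ (fun z => g z + m / 2 * ‖z‖ ^ 2))
    (x w : E) (hmin : ∀ z, g w + c / 2 * ‖w - x‖ ^ 2 ≤ g z + c / 2 * ‖z - x‖ ^ 2)
    (z : E) :
    g w + c / 2 * ‖w - x‖ ^ 2 + (c - m) / 2 * ‖z - w‖ ^ 2 ≤ g z + c / 2 * ‖z - x‖ ^ 2 := by
  have main : ∀ t ∈ Set.Ioo (0:ℝ) 1,
      g w + c / 2 * ‖w - x‖ ^ 2 + (c - m) / 2 * ((1 - t) * ‖z - w‖ ^ 2)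
        ≤ g z + c / 2 * ‖z - x‖ ^ 2 := by
    intro t ht
    obtain ⟨ht0, ht1⟩ := ht
    have hconv := hg.2 (Set.mem_univ w) (Set.mem_univ z)
      (by linarith : (0:ℝ) ≤ 1 - t) ht0.le (by ring)
    simp only [smul_eq_mul] at hconv
    have hid1 : ‖(1 - t) • w + t • z‖ ^ 2
        = (1 - t) * ‖w‖ ^ 2 + t * ‖z‖ ^ 2 - t * (1 - t) * ‖z - w‖ ^ 2 :=
      combo_norm_sq w z t
    have hzt' : ((1 - t) • w + t • z) - x = (1 - t) • (w - x) + t • (z - x) := by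
      module
    have hsub : (z - x) - (w - x) = z - w := by abel
    have hid2 : ‖((1 - t) • w + t • z) - x‖ ^ 2
        = (1 - t) * ‖w - x‖ ^ 2 + t * ‖z - x‖ ^ 2 - t * (1 - t) * ‖z - w‖ ^ 2 := by
      rw [hzt', combo_norm_sq, hsub]
    have hm := hmin ((1 - t) • w + t • z)
    rw [hid2] at hm
    rw [hid1] at hconv
    have key2 : t * (g w + c / 2 * ‖w - x‖ ^ 2 + (c - m) / 2 * ((1 - t) * ‖z - w‖ ^ 2))
        ≤ t * (g z + c / 2 * ‖z - x‖ ^ 2) := by nlinarith [hm, hconv]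
    exact le_of_mul_le_mul_left key2 ht0
  have hlim : Tendsto (fun t : ℝ =>
      g w + c / 2 * ‖w - x‖ ^ 2 + (c - m) / 2 * ((1 - t) * ‖z - w‖ ^ 2)) (𝓝[>] (0:ℝ))
      (𝓝 (g w + c / 2 * ‖w - x‖ ^ 2 + (c - m) / 2 * ((1 - (0:ℝ)) * ‖z - w‖ ^ 2))) := by
    apply Tendsto.mono_left _ nhdsWithin_le_nhds
    exact Continuous.tendsto (by fun_prop) 0
  have hev : ∀ᶠ t in 𝓝[>] (0:ℝ),
      g w + c / 2 * ‖w - x‖ ^ 2 + (c - m) / 2 * ((1 - t) * ‖z - w‖ ^ 2)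
        ≤ g z + c / 2 * ‖z - x‖ ^ 2 := by
    filter_upwards [Ioo_mem_nhdsGT (by norm_num : (0:ℝ) < 1)] with t ht
    exact main t ht
  have := le_of_tendsto hlim hev
  simpa using this

end aux

set_option maxHeartbeats 2000000 in
/-- Sufficient decrease: For a `ρ`-weakly convex `f` with `η`-weakly convex
models `model x` satisfying `|f(y) − model x y| ≤ (β/2)‖y − x‖²`,
`τ > max{η, 2ρ, (4β + ρ + η)/2}`, `ρ̂ = τ/2 + (ρ + η)/4`, `α ∈ (0,1]`, `y` the minimizer of
the model subproblem at `x`, `x⁺ = (1 − α)x + αy`, and `P u` the proximal point defining the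
Moreau envelope `F(u) = f(P u) + (ρ̂/2)‖P u − u‖²`, the sufficient decrease inequality holds:
`F(x⁺) ≤ F(x) − (ρ̂(τ − ρ̂ − β)/(2α(ρ̂ + τ − ρ − η)))‖x⁺ − x‖²
  − (α(2ρ̂ − ρ − η − β)/(2ρ̂(ρ̂ + τ − ρ − η)))‖ρ̂(x − P x)‖²`. -/
theorem model_based_sufficient_decrease {d : ℕ}
    (f : EuclideanSpace ℝ (Fin d) → ℝ)
    (ρ η β : ℝ) (hρ : 0 < ρ) (hη : 0 < η) (hβ : 0 < β)
    (hfwc : ConvexOn ℝ Set.univ (fun z => f z + ρ / 2 * ‖z‖ ^ 2))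
    (hf : Continuous f)
    (model : EuclideanSpace ℝ (Fin d) → EuclideanSpace ℝ (Fin d) → ℝ)
    (hmwc : ∀ x, ConvexOn ℝ Set.univ (fun z => model x z + η / 2 * ‖z‖ ^ 2))
    (hmcont : ∀ x, Continuous (model x))
    (happrox : ∀ x y, |f y - model x y| ≤ β / 2 * ‖y - x‖ ^ 2)
    (τ : ℝ) (hτ : τ > max η (max (2 * ρ) ((4 * β + ρ + η) / 2)))
    (rh : ℝ) (hrh : rh = τ / 2 + (ρ + η) / 4)
    (α : ℝ) (hα : α ∈ Set.Ioc (0 : ℝ) 1)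
    (P : EuclideanSpace ℝ (Fin d) → EuclideanSpace ℝ (Fin d))
    (hP : ∀ u z, f (P u) + rh / 2 * ‖P u - u‖ ^ 2 ≤ f z + rh / 2 * ‖z - u‖ ^ 2)
    (x y : EuclideanSpace ℝ (Fin d))
    (hy : ∀ z, model x y + τ / 2 * ‖y - x‖ ^ 2 ≤ model x z + τ / 2 * ‖z - x‖ ^ 2)
    (xp : EuclideanSpace ℝ (Fin d)) (hxp : xp = (1 - α) • x + α • y) :
    f (P xp) + rh / 2 * ‖P xp - xp‖ ^ 2 ≤
      (f (P x) + rh / 2 * ‖P x - x‖ ^ 2)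
      - rh * (τ - rh - β) / (2 * α * (rh + τ - ρ - η)) * ‖xp - x‖ ^ 2
      - α * (2 * rh - ρ - η - β) / (2 * rh * (rh + τ - ρ - η)) * ‖rh • (x - P x)‖ ^ 2 := by
  obtain ⟨hα0, hα1⟩ := hα
  have ht1 : η < τ := (le_max_left _ _).trans_lt hτ
  have ht2 : 2 * ρ < τ := ((le_max_left _ _).trans (le_max_right _ _)).trans_lt hτ
  have ht3 : (4 * β + ρ + η) / 2 < τ :=
    ((le_max_right _ _).trans (le_max_right _ _)).trans_lt hτ
  have hrhρ : ρ < rh := by rw [hrh]; linarith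
  have hrh0 : 0 < rh := hρ.trans hrhρ
  have ha : 0 < rh + τ - ρ - η := by rw [hrh]; linarith
  -- strong minimality inequalities
  have hc := strong_min (model x) η τ (hmwc x) x y hy (P x)
  have hd := strong_min f ρ rh hfwc x (P x) (hP x) y
  -- model accuracy
  have ha1 : model x (P x) ≤ f (P x) + β / 2 * ‖P x - x‖ ^ 2 := by
    have h := abs_le.mp (happrox x (P x)); linarith [h.1]
  have ha2 : f y ≤ model x y + β / 2 * ‖y - x‖ ^ 2 := by
    have h := abs_le.mp (happrox x y); linarith [h.2]
  -- norm identities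
  have hS : ‖P x - y‖ ^ 2
      = ‖P x - x‖ ^ 2 - 2 * (inner ℝ (y - x) (P x - x) : ℝ) + ‖y - x‖ ^ 2 := by
    have h : P x - y = (P x - x) - (y - x) := by abel
    rw [h, norm_sub_sq_real, real_inner_comm]
  have hS' : ‖y - P x‖ ^ 2
      = ‖P x - x‖ ^ 2 - 2 * (inner ℝ (y - x) (P x - x) : ℝ) + ‖y - x‖ ^ 2 := by
    rw [norm_sub_rev]; exact hS
  rw [hS] at hc
  rw [hS'] at hd
  -- the key inner-product bound
  have hstar : (2 * τ - ρ - η - β) * ‖y - x‖ ^ 2 + (2 * rh - ρ - η - β) * ‖P x - x‖ ^ 2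
      ≤ 2 * (rh + τ - ρ - η) * (inner ℝ (y - x) (P x - x) : ℝ) := by
    nlinarith [hc, hd, ha1, ha2]
  -- decrease from the prox inequality
  have hPxxp : ‖P x - xp‖ ^ 2 = ‖P x - x‖ ^ 2
      - 2 * α * (inner ℝ (y - x) (P x - x) : ℝ) + α ^ 2 * ‖y - x‖ ^ 2 := by
    have h : P x - xp = (P x - x) - α • (y - x) := by rw [hxp]; module
    rw [h, norm_sub_sq_real, real_inner_smul_right, norm_smul, Real.norm_eq_abs, mul_pow,
      sq_abs, real_inner_comm]
    ring
  have hchain := hP xp (P x)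
  rw [hPxxp] at hchain
  have hq : f (P xp) + rh / 2 * ‖P xp - xp‖ ^ 2
      ≤ f (P x) + rh / 2 * ‖P x - x‖ ^ 2 + rh / 2 * (α ^ 2 * ‖y - x‖ ^ 2)
        - rh * α * (inner ℝ (y - x) (P x - x) : ℝ) := by linarith [hchain]
  have hq2a : 2 * (rh + τ - ρ - η) * (f (P xp) + rh / 2 * ‖P xp - xp‖ ^ 2)
      ≤ 2 * (rh + τ - ρ - η) * (f (P x) + rh / 2 * ‖P x - x‖ ^ 2
        + rh / 2 * (α ^ 2 * ‖y - x‖ ^ 2) - rh * α * (inner ℝ (y - x) (P x - x) : ℝ)) :=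
    mul_le_mul_of_nonneg_left hq (by linarith)
  have hstar' : rh * α * ((2 * τ - ρ - η - β) * ‖y - x‖ ^ 2
        + (2 * rh - ρ - η - β) * ‖P x - x‖ ^ 2)
      ≤ rh * α * (2 * (rh + τ - ρ - η) * (inner ℝ (y - x) (P x - x) : ℝ)) :=
    mul_le_mul_of_nonneg_left hstar (by positivity)
  have hpos : 0 ≤ rh * α * (1 - α) * (rh + τ - ρ - η) * ‖y - x‖ ^ 2 := by
    have : (0:ℝ) ≤ 1 - α := by linarith
    positivity
  have hkey : rh * (τ - rh - β) * α * ‖y - x‖ ^ 2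
        + α * (2 * rh - ρ - η - β) * rh * ‖P x - x‖ ^ 2
      ≤ 2 * (rh + τ - ρ - η) * ((f (P x) + rh / 2 * ‖P x - x‖ ^ 2)
        - (f (P xp) + rh / 2 * ‖P xp - xp‖ ^ 2)) := by
    linarith [hq2a, hstar', hpos]
  -- convert to the stated form
  have hxpx : ‖xp - x‖ ^ 2 = α ^ 2 * ‖y - x‖ ^ 2 := by
    have h : xp - x = α • (y - x) := by rw [hxp]; module
    rw [h, norm_smul, Real.norm_eq_abs, mul_pow, sq_abs]
  have hvx : ‖rh • (x - P x)‖ ^ 2 = rh ^ 2 * ‖P x - x‖ ^ 2 := by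
    rw [norm_smul, Real.norm_eq_abs, mul_pow, sq_abs, norm_sub_rev]
  rw [hxpx, hvx]
  have h2a : (0:ℝ) < 2 * (rh + τ - ρ - η) := by linarith
  have hdiv : (rh * (τ - rh - β) * α * ‖y - x‖ ^ 2
        + α * (2 * rh - ρ - η - β) * rh * ‖P x - x‖ ^ 2) / (2 * (rh + τ - ρ - η))
      ≤ (f (P x) + rh / 2 * ‖P x - x‖ ^ 2) - (f (P xp) + rh / 2 * ‖P xp - xp‖ ^ 2) := by
    rw [div_le_iff₀ h2a]
    linarith [hkey]
  have hne1 : (0:ℝ) < 2 * α * (rh + τ - ρ - η) := by nlinarith [mul_pos hα0 ha]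
  have hne2 : (0:ℝ) < 2 * rh * (rh + τ - ρ - η) := by nlinarith [mul_pos hrh0 ha]
  have e1 : rh * (τ - rh - β) / (2 * α * (rh + τ - ρ - η)) * (α ^ 2 * ‖y - x‖ ^ 2)
      = rh * (τ - rh - β) * α * ‖y - x‖ ^ 2 / (2 * (rh + τ - ρ - η)) := by
    rw [div_mul_eq_mul_div, div_eq_div_iff hne1.ne' h2a.ne']
    ring
  have e2 : α * (2 * rh - ρ - η - β) / (2 * rh * (rh + τ - ρ - η)) * (rh ^ 2 * ‖P x - x‖ ^ 2)
      = α * (2 * rh - ρ - η - β) * rh * ‖P x - x‖ ^ 2 / (2 * (rh + τ - ρ - η)) := by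
    rw [div_mul_eq_mul_div, div_eq_div_iff hne2.ne' h2a.ne']
    ring
  have eT : rh * (τ - rh - β) / (2 * α * (rh + τ - ρ - η)) * (α ^ 2 * ‖y - x‖ ^ 2)
        + α * (2 * rh - ρ - η - β) / (2 * rh * (rh + τ - ρ - η)) * (rh ^ 2 * ‖P x - x‖ ^ 2)
      = (rh * (τ - rh - β) * α * ‖y - x‖ ^ 2
        + α * (2 * rh - ρ - η - β) * rh * ‖P x - x‖ ^ 2) / (2 * (rh + τ - ρ - η)) := by
    rw [e1, e2, ← add_div]
  linarith [hdiv, eT.ge, eT.le]
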